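/- Let K be a field of characteristic 0 and m ≥ 1 an integer. Consider the K-linear subspace M = { (g(t^m, t), g(−t^m, t)) : g ∈ K[[x, t]] } of K[[t]] × K[[t]], where g(±t^m, t) denotes substitution of x = ±t^m. Then M = { (a, b) ∈ K[[t]] × K[[t]] : a ≡ b (mod t^m) }, and the quotient (K[[t]] × K[[t]])/M is a K-vector space of dimension m. -/

import Mathlib

/-- The substitution `x ↦ ε·t^m` (with `t ↦ t`) applied to a two-variable formal power
series `g ∈ K[[x, t]]` (encoded as `MvPowerSeries (Fin 2) K` with `x` the variable `0`
and `t` the variable `1`): the coefficient of `t^n` in `g(ε t^m, t)` is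
`∑_{m·i + j = n} ε^i · g_{i,j}`. -/
noncomputable def substPow {K : Type*} [Field K] (m : ℕ) (ε : K)
    (g : MvPowerSeries (Fin 2) K) : PowerSeries K :=
  PowerSeries.mk fun n =>
    ∑ i ∈ Finset.range (n + 1),
      if m * i ≤ n then
        ε ^ i * MvPowerSeries.coeff (Finsupp.single 0 i + Finsupp.single 1 (n - m * i)) g
      else 0

/-- The subspace `M = { (g(t^m, t), g(−t^m, t)) : g ∈ K[[x, t]] }` of
`K[[t]] × K[[t]]`. -/
noncomputable def tacnodeImage (K : Type*) [Field K] (m : ℕ) :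
    Set (PowerSeries K × PowerSeries K) :=
  {p | ∃ g : MvPowerSeries (Fin 2) K, p = (substPow m 1 g, substPow m (-1) g)}

lemma substPow_add {K : Type*} [Field K] (m : ℕ) (ε : K)
    (g g' : MvPowerSeries (Fin 2) K) :
    substPow m ε (g + g') = substPow m ε g + substPow m ε g' := by
  ext n
  simp only [substPow, PowerSeries.coeff_mk, map_add, ← Finset.sum_add_distrib]
  apply Finset.sum_congr rfl
  intro i _
  split_ifs with h
  · ring
  · simp

lemma substPow_smul {K : Type*} [Field K] (m : ℕ) (ε c : K)
    (g : MvPowerSeries (Fin 2) K) :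
    substPow m ε (c • g) = c • substPow m ε g := by
  ext n
  simp only [substPow, PowerSeries.coeff_mk, PowerSeries.coeff_smul, Finset.mul_sum,
    map_smul, smul_eq_mul]
  apply Finset.sum_congr rfl
  intro i _
  split_ifs with h
  · ring
  · simp

lemma coeff_substPow_lt {K : Type*} [Field K] {m : ℕ} (hm : 1 ≤ m) (ε : K)
    (g : MvPowerSeries (Fin 2) K) {k : ℕ} (hk : k < m) :
    PowerSeries.coeff k (substPow m ε g) =
      MvPowerSeries.coeff (Finsupp.single 1 k) g := by
  rw [substPow, PowerSeries.coeff_mk]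
  rw [Finset.sum_eq_single_of_mem 0 (Finset.mem_range.2 (Nat.succ_pos k))]
  · simp
  · intro b _ hb
    rw [if_neg]
    have : m ≤ m * b := Nat.le_mul_of_pos_right m (Nat.pos_of_ne_zero hb)
    omega

lemma coeff_substPow_two_rows {K : Type*} [Field K] {m : ℕ} (hm : 1 ≤ m) (ε : K)
    (g : MvPowerSeries (Fin 2) K)
    (hg : ∀ i j : ℕ, 2 ≤ i → g (Finsupp.single 0 i + Finsupp.single 1 j) = 0) (n : ℕ) :
    PowerSeries.coeff n (substPow m ε g) =
      g (Finsupp.single 1 n) +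
        (if m ≤ n then ε * g (Finsupp.single 0 1 + Finsupp.single 1 (n - m)) else 0) := by
  rw [substPow, PowerSeries.coeff_mk]
  by_cases hn : m ≤ n
  · have h1 : (1 : ℕ) ∈ Finset.range (n + 1) := by
      simp; omega
    have hsub : ({0, 1} : Finset ℕ) ⊆ Finset.range (n + 1) := by
      intro x hx
      simp at hx
      rcases hx with rfl | rfl <;> simp <;> omega
    rw [← Finset.sum_subset hsub]
    · rw [Finset.sum_pair (by norm_num : (0:ℕ) ≠ 1)]
      simp only [MvPowerSeries.coeff_apply]
      rw [if_pos (by omega : m * 0 ≤ n), if_pos (by omega : m * 1 ≤ n), if_pos hn]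
      simp [Finsupp.single_zero]
    · intro x _ hx
      simp only [Finset.mem_insert, Finset.mem_singleton, not_or] at hx
      by_cases hmx : m * x ≤ n
      · rw [if_pos hmx, MvPowerSeries.coeff_apply, hg x _ (by omega), mul_zero]
      · rw [if_neg hmx]
  · rw [if_neg hn]
    rw [Finset.sum_eq_single_of_mem 0 (Finset.mem_range.2 (Nat.succ_pos n))]
    · simp [MvPowerSeries.coeff_apply, Finsupp.single_zero]
    · intro b _ hb
      rw [if_neg]
      have : m ≤ m * b := Nat.le_mul_of_pos_right m (Nat.pos_of_ne_zero hb)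
      omega

/-- **Local contribution of a tacnode which is the limit of two outer nodes.**  Let `K`
be a field of characteristic `0` and `m ≥ 1`.  The `K`-linear subspace
`M = { (g(t^m, t), g(−t^m, t)) : g ∈ K[[x, t]] }` of `K[[t]] × K[[t]]` (it is indeed
closed under addition and scalar multiplication) equals
`{ (a, b) : a ≡ b (mod t^m) }`, and the quotient `(K[[t]] × K[[t]])/M` is a `K`-vector
space of dimension `m`: there are `m` vectors whose classes give a basis, i.e. every
element has a unique decomposition as an element of `M` plus a combination of them. -/
theorem tacnodeImage_eq_and_quotient_dim {K : Type*} [Field K] [CharZero K]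
    (m : ℕ) (hm : 1 ≤ m) :
    (∀ p ∈ tacnodeImage K m, ∀ q ∈ tacnodeImage K m, p + q ∈ tacnodeImage K m) ∧
    (∀ (c : K), ∀ p ∈ tacnodeImage K m, c • p ∈ tacnodeImage K m) ∧
    tacnodeImage K m =
      {p : PowerSeries K × PowerSeries K |
        ∀ k < m, PowerSeries.coeff k p.1 = PowerSeries.coeff k p.2} ∧
    ∃ v : Fin m → PowerSeries K × PowerSeries K,
      ∀ p : PowerSeries K × PowerSeries K,
        ∃! c : Fin m → K, p - ∑ i, c i • v i ∈ tacnodeImage K m := by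
  have h2 : (2 : K) ≠ 0 := two_ne_zero
  -- set equality
  have hset : tacnodeImage K m =
      {p : PowerSeries K × PowerSeries K |
        ∀ k < m, PowerSeries.coeff k p.1 = PowerSeries.coeff k p.2} := by
    ext p
    constructor
    · rintro ⟨g, rfl⟩ k hk
      simp only
      rw [coeff_substPow_lt hm 1 g hk, coeff_substPow_lt hm (-1) g hk]
    · intro hp
      set a := p.1 with ha
      set b := p.2 with hb
      set g : MvPowerSeries (Fin 2) K := fun d =>
        if d 0 = 0 then (PowerSeries.coeff (d 1) a + PowerSeries.coeff (d 1) b) / 2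
        else if d 0 = 1 then
          (PowerSeries.coeff (d 1 + m) a - PowerSeries.coeff (d 1 + m) b) / 2
        else 0 with hgdef
      have hd0 : ∀ i j : ℕ,
          (Finsupp.single (0 : Fin 2) i + Finsupp.single (1 : Fin 2) j) (0 : Fin 2) = i := by
        intro i j
        simp [Finsupp.single_apply]
      have hd1 : ∀ i j : ℕ,
          (Finsupp.single (0 : Fin 2) i + Finsupp.single (1 : Fin 2) j) (1 : Fin 2) = j := by
        intro i j
        simp [Finsupp.single_apply]
      have hg : ∀ i j : ℕ, 2 ≤ i → g (Finsupp.single 0 i + Finsupp.single 1 j) = 0 := by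
        intro i j hi
        simp only [hgdef, hd0, hd1]
        rw [if_neg (by omega), if_neg (by omega)]
      have hg0 : ∀ j : ℕ, g (Finsupp.single 1 j) =
          (PowerSeries.coeff j a + PowerSeries.coeff j b) / 2 := by
        intro j
        have e0 : (Finsupp.single (1 : Fin 2) j) (0 : Fin 2) = 0 := by
          simp [Finsupp.single_apply]
        have e1 : (Finsupp.single (1 : Fin 2) j) (1 : Fin 2) = j := by simp
        simp only [hgdef, e0, e1]
        norm_num
      have hg1 : ∀ j : ℕ, g (Finsupp.single 0 1 + Finsupp.single 1 j) =
          (PowerSeries.coeff (j + m) a - PowerSeries.coeff (j + m) b) / 2 := by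
        intro j
        simp only [hgdef, hd0, hd1]
        norm_num
      refine ⟨g, ?_⟩
      have key : ∀ ε : K, ∀ n : ℕ, PowerSeries.coeff n (substPow m ε g) =
          (PowerSeries.coeff n a + PowerSeries.coeff n b) / 2 +
          (if m ≤ n then
            ε * ((PowerSeries.coeff n a - PowerSeries.coeff n b) / 2) else 0) := by
        intro ε n
        rw [coeff_substPow_two_rows hm ε g hg n, hg0]
        by_cases hn : m ≤ n
        · rw [if_pos hn, if_pos hn, hg1, Nat.sub_add_cancel hn]
        · rw [if_neg hn, if_neg hn]
      have h1 : a = substPow m 1 g := by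
        ext n
        rw [key 1 n]
        by_cases hn : m ≤ n
        · rw [if_pos hn]; field_simp <;> ring
        · rw [if_neg hn]
          have := hp n (by omega)
          rw [← ha, ← hb] at this
          rw [← this]
          field_simp <;> ring
      have h1' : b = substPow m (-1) g := by
        ext n
        rw [key (-1) n]
        by_cases hn : m ≤ n
        · rw [if_pos hn]; field_simp <;> ring
        · rw [if_neg hn]
          have := hp n (by omega)
          rw [← ha, ← hb] at this
          rw [this]
          field_simp <;> ring
      exact Prod.ext h1 h1'
  refine ⟨?_, ?_, hset, ?_⟩
  · rintro p ⟨g, rfl⟩ q ⟨g', rfl⟩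
    exact ⟨g + g', by simp [substPow_add, Prod.ext_iff]⟩
  · rintro c p ⟨g, rfl⟩
    exact ⟨c • g, by simp [substPow_smul, Prod.ext_iff]⟩
  · refine ⟨fun i => (PowerSeries.monomial (i : ℕ) 1, 0), ?_⟩
    intro p
    show ∃! c : Fin m → K,
      p - ∑ i : Fin m, c i • ((PowerSeries.monomial (i : ℕ) 1, 0) :
        PowerSeries K × PowerSeries K) ∈ tacnodeImage K m
    have hcoeff : ∀ (c : Fin m → K) (k : ℕ) (hk : k < m),
        PowerSeries.coeff k (∑ i : Fin m, c i • PowerSeries.monomial (i : ℕ) (1 : K))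
          = c ⟨k, hk⟩ := by
      intro c k hk
      rw [map_sum]
      rw [Finset.sum_eq_single_of_mem ⟨k, hk⟩ (Finset.mem_univ _)]
      · simp
      · intro b _ hb
        simp only [PowerSeries.coeff_smul, PowerSeries.coeff_monomial]
        rw [if_neg (by
          intro h
          exact hb (Fin.ext h.symm))]
        simp
    have hmem : ∀ (c : Fin m → K),
        (p - ∑ i, c i • ((PowerSeries.monomial (i : ℕ) 1, 0) :
            PowerSeries K × PowerSeries K)) ∈ tacnodeImage K m ↔
        ∀ k (hk : k < m),
          PowerSeries.coeff k p.1 - c ⟨k, hk⟩ = PowerSeries.coeff k p.2 := by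
      intro c
      rw [hset]
      constructor
      · intro h k hk
        have := h k hk
        simpa [Prod.fst_sum, Prod.snd_sum, hcoeff c k hk] using this
      · intro h k hk
        simpa [Prod.fst_sum, Prod.snd_sum, hcoeff c k hk] using h k hk
    refine ⟨fun i => PowerSeries.coeff (i : ℕ) p.1 - PowerSeries.coeff (i : ℕ) p.2,
      ?_, ?_⟩
    · exact (hmem _).mpr fun k hk => by simp
    · intro c hc
      replace hc := (hmem c).mp hc
      funext i
      have h := hc i i.isLt
      have h2 : c ⟨(i : ℕ), i.isLt⟩ =
          PowerSeries.coeff (i : ℕ) p.1 - PowerSeries.coeff (i : ℕ) p.2 := by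
        rw [← h]; ring
      simpa using h2
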